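/- arXiv:1504.04428 — 2 statements merged into one kernel-verified Lean document; each statement's English description precedes it below -/
import Mathlib

section
/- In the nonuniform-channel setting, every iterate of the relative value iteration algorithm is ⊵-monotone: fix any reference state Q§ ∈ 𝒬 and define V₀(Q) = 0 for all Q and V_{n+1}(Q) = (T V_n)(Q) − (T V_n)(Q§). Then for every n ≥ 0 and all Q¹, Q² ∈ 𝒬 with Q² ⊵ Q¹, V_n(Q²) ≥ V_n(Q¹). (This is the inductive claim establishing Lemma 5 of the paper, the partial monotonicity of the value function.) -/
open Finset

/-- State space of the nonuniform-channel multicast MDP: request queue matrices capped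
by `N`. -/
def QS (M K : ℕ) (N : Fin M → Fin K → ℕ) : Type :=
  {Q : Fin M → Fin K → ℕ // ∀ m k, Q m k ≤ N m k}

/-- Next state when content `u` is multicast in state `Q` and arrival `a` occurs. -/
def nextQ {M K : ℕ} {N : Fin M → Fin K → ℕ} (Q : QS M K N) (u : Fin M)
    (a : Fin M → Fin K → ℕ) : QS M K N :=
  ⟨fun m k => min ((if m = u then 0 else Q.1 m k) + a m k) (N m k),
    fun _ _ => min_le_right _ _⟩

/-- Power cost of multicasting with per-user power levels `pu` to the users with pending
requests in `q`: the maximum of `pu` over `{k : q k > 0}`, and `0` if this set is empty. -/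
noncomputable def PCost {K : ℕ} (pu : Fin K → ℝ) (q : Fin K → ℕ) : ℝ :=
  if h : (Finset.univ.filter fun k => 0 < q k).Nonempty then
    (Finset.univ.filter fun k => 0 < q k).sup' h pu
  else 0

/-- Per-stage cost in the nonuniform case. -/
noncomputable def gCost {M K : ℕ} {N : Fin M → Fin K → ℕ} (wp wf : ℝ)
    (p : Fin M → Fin K → ℝ) (f : Fin M → ℝ) (Q : QS M K N) (u : Fin M) : ℝ :=
  (∑ m, ∑ k, (Q.1 m k : ℝ)) + wp * PCost (p u) (Q.1 u) + wf * f u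

/-- State-action cost function `J_V(Q,u)` in the nonuniform case. -/
noncomputable def JCost {M K : ℕ} {N : Fin M → Fin K → ℕ}
    (𝒜 : Finset (Fin M → Fin K → ℕ)) (ρ : (Fin M → Fin K → ℕ) → ℝ)
    (wp wf : ℝ) (p : Fin M → Fin K → ℝ) (f : Fin M → ℝ)
    (V : QS M K N → ℝ) (Q : QS M K N) (u : Fin M) : ℝ :=
  gCost wp wf p f Q u + ∑ a ∈ 𝒜, ρ a * V (nextQ Q u a)

/-- The partial order `q² ⊵ q¹` on per-content request queue vectors. -/
def TriVec {K : ℕ} (q₂ q₁ : Fin K → ℕ) : Prop :=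
  ∀ k : Fin K,
    ((∃ j, k ≤ j ∧ 0 < q₁ j) → q₁ k ≤ q₂ k) ∧
    ((¬ ∃ j, k ≤ j ∧ 0 < q₁ j) → q₂ k = q₁ k)

/-- The partial order `Q² ⊵ Q¹` on states: `Q² m ⊵ Q¹ m` for every content `m`. -/
def TriState {M K : ℕ} {N : Fin M → Fin K → ℕ} (Q₂ Q₁ : QS M K N) : Prop :=
  ∀ m, TriVec (Q₂.1 m) (Q₁.1 m)

/-- Bellman operator `(T V)(Q) = min_u J_V(Q,u)` in the nonuniform case. -/
noncomputable def TBell {M K : ℕ} (hM : 1 ≤ M) {N : Fin M → Fin K → ℕ}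
    (𝒜 : Finset (Fin M → Fin K → ℕ)) (ρ : (Fin M → Fin K → ℕ) → ℝ)
    (wp wf : ℝ) (p : Fin M → Fin K → ℝ) (f : Fin M → ℝ)
    (V : QS M K N → ℝ) (Q : QS M K N) : ℝ :=
  haveI : Nonempty (Fin M) := Fin.pos_iff_nonempty.mp hM
  Finset.univ.inf' Finset.univ_nonempty (fun u => JCost 𝒜 ρ wp wf p f V Q u)

/-- Iterates of the relative value iteration algorithm with reference state `Qref`:
`V₀ = 0` and `V_{n+1}(Q) = (T V_n)(Q) - (T V_n)(Qref)`. -/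
noncomputable def Vseq {M K : ℕ} (hM : 1 ≤ M) {N : Fin M → Fin K → ℕ}
    (𝒜 : Finset (Fin M → Fin K → ℕ)) (ρ : (Fin M → Fin K → ℕ) → ℝ)
    (wp wf : ℝ) (p : Fin M → Fin K → ℝ) (f : Fin M → ℝ)
    (Qref : QS M K N) : ℕ → QS M K N → ℝ
  | 0 => fun _ => 0
  | n + 1 => fun Q =>
      TBell hM 𝒜 ρ wp wf p f (Vseq hM 𝒜 ρ wp wf p f Qref n) Q -
        TBell hM 𝒜 ρ wp wf p f (Vseq hM 𝒜 ρ wp wf p f Qref n) Qref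


lemma triVec_le {K : ℕ} {q₂ q₁ : Fin K → ℕ} (h : TriVec q₂ q₁) (k : Fin K) :
    q₁ k ≤ q₂ k := by
  by_cases hx : ∃ j, k ≤ j ∧ 0 < q₁ j
  · exact (h k).1 hx
  · exact le_of_eq ((h k).2 hx).symm

lemma triState_next {M K : ℕ} {N : Fin M → Fin K → ℕ} {Q₂ Q₁ : QS M K N}
    (h : TriState Q₂ Q₁) (u : Fin M) (a : Fin M → Fin K → ℕ) :
    TriState (nextQ Q₂ u a) (nextQ Q₁ u a) := by
  intro m k
  by_cases hmu : m = u
  · simp only [nextQ, hmu, if_pos rfl]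
    exact ⟨fun _ => le_rfl, fun _ => rfl⟩
  · simp only [nextQ, if_neg hmu]
    constructor
    · intro _
      exact min_le_min (Nat.add_le_add_right (triVec_le (h m) k) _) le_rfl
    · intro hne
      have h0 : ¬ ∃ j, k ≤ j ∧ 0 < Q₁.1 m j := by
        rintro ⟨j, hkj, hj⟩
        exact hne ⟨j, hkj, lt_min (Nat.lt_of_lt_of_le hj (Nat.le_add_right _ _))
          (Nat.lt_of_lt_of_le hj (Q₁.2 m j))⟩
      rw [(h m k).2 h0]

lemma pcost_tri_eq {K : ℕ} {q₂ q₁ : Fin K → ℕ} (h : TriVec q₂ q₁) {pu : Fin K → ℝ}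
    (hmono : Monotone pu) : PCost pu q₂ = PCost pu q₁ := by
  by_cases h1 : (Finset.univ.filter fun k => 0 < q₁ k).Nonempty
  · obtain ⟨kstar, hks⟩ := Finset.mem_filter.mp ((Finset.univ.filter fun k => 0 < q₁ k).max'_mem h1)
    set ks := (Finset.univ.filter fun k => 0 < q₁ k).max' h1 with hksdef
    have hmax : ∀ j, 0 < q₁ j → j ≤ ks := fun j hj =>
      Finset.le_max' _ j (Finset.mem_filter.mpr ⟨Finset.mem_univ _, hj⟩)
    have hq2ks : 0 < q₂ ks := lt_of_lt_of_le hks ((h ks).1 ⟨ks, le_rfl, hks⟩)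
    have h2 : (Finset.univ.filter fun k => 0 < q₂ k).Nonempty :=
      ⟨ks, Finset.mem_filter.mpr ⟨Finset.mem_univ _, hq2ks⟩⟩
    rw [PCost, PCost, dif_pos h1, dif_pos h2]
    have hle2 : ∀ j, 0 < q₂ j → j ≤ ks := by
      intro j hj
      by_contra hjk
      have hlt : ks < j := lt_of_not_ge hjk
      have h0 : ¬ ∃ i, j ≤ i ∧ 0 < q₁ i := by
        rintro ⟨i, hji, hi⟩
        exact absurd (le_trans hji (hmax i hi)) (not_le.mpr hlt)
      have : q₂ j = q₁ j := (h j).2 h0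
      have hq1j : q₁ j = 0 := by
        by_contra hq
        exact absurd (hmax j (Nat.pos_of_ne_zero hq)) (not_le.mpr hlt)
      omega
    have e2 : (Finset.univ.filter fun k => 0 < q₂ k).sup' h2 pu = pu ks := by
      apply le_antisymm
      · exact Finset.sup'_le _ _ fun j hj =>
          hmono (hle2 j (Finset.mem_filter.mp hj).2)
      · exact Finset.le_sup' pu (Finset.mem_filter.mpr ⟨Finset.mem_univ _, hq2ks⟩)
    have e1 : (Finset.univ.filter fun k => 0 < q₁ k).sup' h1 pu = pu ks := by
      apply le_antisymm
      · exact Finset.sup'_le _ _ fun j hj =>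
          hmono (hmax j (Finset.mem_filter.mp hj).2)
      · exact Finset.le_sup' pu (Finset.mem_filter.mpr ⟨Finset.mem_univ _, hks⟩)
    rw [e1, e2]
  · have hz : ∀ j, ¬ 0 < q₁ j := by
      intro j hj
      exact h1 ⟨j, Finset.mem_filter.mpr ⟨Finset.mem_univ _, hj⟩⟩
    have : q₂ = q₁ := funext fun k => (h k).2 (by rintro ⟨j, _, hj⟩; exact hz j hj)
    rw [this]

/-- Every iterate of relative value iteration in the nonuniform case is `⊵`-monotone
(inductive claim for Lemma 5). -/
theorem rvia_iterates_tri_monotone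
    {M K : ℕ} (hM : 1 ≤ M) (hK : 1 ≤ K) (N : Fin M → Fin K → ℕ)
    (𝒜 : Finset (Fin M → Fin K → ℕ)) (ρ : (Fin M → Fin K → ℕ) → ℝ)
    (hρ0 : ∀ a ∈ 𝒜, 0 ≤ ρ a) (hρ1 : ∑ a ∈ 𝒜, ρ a = 1)
    (wp wf : ℝ) (p : Fin M → Fin K → ℝ) (f : Fin M → ℝ)
    (hp0 : ∀ m k, 0 ≤ p m k) (hpmono : ∀ m, Monotone (p m))
    (Qref : QS M K N) :
    ∀ (n : ℕ) (Q₁ Q₂ : QS M K N), TriState Q₂ Q₁ →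
      Vseq hM 𝒜 ρ wp wf p f Qref n Q₁ ≤ Vseq hM 𝒜 ρ wp wf p f Qref n Q₂ := by
  intro n
  induction n with
  | zero => intro Q₁ Q₂ _; simp [Vseq]
  | succ n ih =>
    intro Q₁ Q₂ h
    simp only [Vseq]
    have key : TBell hM 𝒜 ρ wp wf p f (Vseq hM 𝒜 ρ wp wf p f Qref n) Q₁ ≤
        TBell hM 𝒜 ρ wp wf p f (Vseq hM 𝒜 ρ wp wf p f Qref n) Q₂ := by
      unfold TBell
      apply Finset.le_inf'
      intro u hu
      refine le_trans (Finset.inf'_le _ hu) ?_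
      have hg : gCost wp wf p f Q₁ u ≤ gCost wp wf p f Q₂ u := by
        unfold gCost
        have hsum : (∑ m, ∑ k, (Q₁.1 m k : ℝ)) ≤ ∑ m, ∑ k, (Q₂.1 m k : ℝ) := by
          apply Finset.sum_le_sum
          intro m _
          apply Finset.sum_le_sum
          intro k _
          exact_mod_cast triVec_le (h m) k
        have hP : PCost (p u) (Q₂.1 u) = PCost (p u) (Q₁.1 u) :=
          pcost_tri_eq (h u) (hpmono u)
        rw [hP]
        linarith
      unfold JCost
      refine add_le_add hg (Finset.sum_le_sum fun a ha => ?_)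
      exact mul_le_mul_of_nonneg_left (ih _ _ (triState_next h u a)) (hρ0 a ha)
    exact sub_le_sub_right key _
end

section
/- Partial switch structure of the low-complexity suboptimal policy in the nonuniform case (Theorem 4, part 2, of the paper): in the nonuniform-channel setting, suppose V : 𝒬 → ℝ is separable with ⊵-monotone components, i.e., V(Q) = Σ_m V_m(Q m) where each V_m : (Fin K → ℕ) → ℝ satisfies q² ⊵ q¹ implies V_m(q²) ≥ V_m(q¹). If J_V(Q, u) ≤ J_V(Q, v) for all v ∈ Fin M, and k ∈ Fin K is such that Q u k < N u k and Q + E_{u,k} ⊵ Q, then J_V(Q + E_{u,k}, u) ≤ J_V(Q + E_{u,k}, v) for all v ∈ Fin M. -/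
open Finset

/-- The state `Q + E_{u,k}`: entry `(u,k)` is increased by 1 (requires `Q u k < N u k`). -/
def addE {M K : ℕ} {N : Fin M → Fin K → ℕ} (Q : QS M K N) (u : Fin M) (k : Fin K)
    (h : Q.1 u k < N u k) : QS M K N :=
  ⟨Function.update Q.1 u (Function.update (Q.1 u) k (Q.1 u k + 1)), by
    intro m i
    rcases eq_or_ne m u with rfl | hm
    · simp only [Function.update_self]
      rcases eq_or_ne i k with rfl | hi
      · simp only [Function.update_self]; exact h
      · simp only [Function.update_of_ne hi]; exact Q.2 m i
    · simp only [Function.update_of_ne hm]; exact Q.2 m i⟩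

section Aux

variable {M K : ℕ} {N : Fin M → Fin K → ℕ}

lemma addE_apply (Q : QS M K N) (u : Fin M) (k : Fin K) (h : Q.1 u k < N u k)
    (m : Fin M) (k' : Fin K) :
    (addE Q u k h).1 m k' = if m = u ∧ k' = k then Q.1 u k + 1 else Q.1 m k' := by
  show Function.update Q.1 u (Function.update (Q.1 u) k (Q.1 u k + 1)) m k' = _
  by_cases hm : m = u
  · subst hm
    simp only [Function.update_self]
    by_cases hk : k' = k
    · subst hk; simp
    · simp [Function.update_of_ne hk, hk]
  · simp [Function.update_of_ne hm, hm]

lemma le_addE (Q : QS M K N) (u : Fin M) (k : Fin K) (h : Q.1 u k < N u k)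
    (m : Fin M) (k' : Fin K) : Q.1 m k' ≤ (addE Q u k h).1 m k' := by
  rw [addE_apply]
  split
  · next h' => rcases h' with ⟨rfl, rfl⟩; omega
  · exact le_rfl

lemma addE_ne (Q : QS M K N) (u : Fin M) (k : Fin K) (h : Q.1 u k < N u k)
    (m : Fin M) (hm : m ≠ u) : (addE Q u k h).1 m = Q.1 m := by
  funext k'; rw [addE_apply]; simp [hm]

lemma nextQ_addE_self (Q : QS M K N) (u : Fin M) (k : Fin K) (h : Q.1 u k < N u k)
    (a : Fin M → Fin K → ℕ) : nextQ (addE Q u k h) u a = nextQ Q u a := by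
  apply Subtype.ext; funext m k'
  show min ((if m = u then 0 else (addE Q u k h).1 m k') + a m k') (N m k') = _
  by_cases hm : m = u
  · subst hm; simp [nextQ]
  · simp [nextQ, hm, addE_apply]

lemma sum_addE (Q : QS M K N) (u : Fin M) (k : Fin K) (h : Q.1 u k < N u k) :
    ∑ m, ∑ k', (addE Q u k h).1 m k' = (∑ m, ∑ k', Q.1 m k') + 1 := by
  have hrow : ∀ m, ∑ k', (addE Q u k h).1 m k'
      = (∑ k', Q.1 m k') + (if m = u then 1 else 0) := by
    intro m
    by_cases hm : m = u
    · subst hm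
      have hpt : ∀ k', (addE Q m k h).1 m k' = Q.1 m k' + (if k' = k then 1 else 0) := by
        intro k'; rw [addE_apply]; by_cases hk : k' = k <;> simp [hk]
      rw [Finset.sum_congr rfl fun k' _ => hpt k', Finset.sum_add_distrib]
      simp
    · simp [addE_apply, hm]
  rw [Finset.sum_congr rfl fun m _ => hrow m, Finset.sum_add_distrib]
  simp

lemma PCost_addE (Q : QS M K N) (u : Fin M) (k : Fin K) (h : Q.1 u k < N u k)
    (pu : Fin K → ℝ) (hmono : Monotone pu)
    (j : Fin K) (hkj : k ≤ j) (hj : 0 < Q.1 u j) :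
    PCost pu ((addE Q u k h).1 u) = PCost pu (Q.1 u) := by
  unfold PCost
  set S := Finset.univ.filter fun i => 0 < Q.1 u i with hSdef
  set S' := Finset.univ.filter fun i => 0 < (addE Q u k h).1 u i with hS'def
  have hjS : j ∈ S := by simp [hSdef, hj]
  have hSS' : S ⊆ S' := by
    intro i hi
    simp only [hSdef, hS'def, Finset.mem_filter, Finset.mem_univ, true_and] at hi ⊢
    exact lt_of_lt_of_le hi (le_addE Q u k h u i)
  have hS'sub : ∀ i ∈ S', i = k ∨ i ∈ S := by
    intro i hi
    by_cases hik : i = k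
    · exact Or.inl hik
    · right
      simp only [hSdef, hS'def, Finset.mem_filter, Finset.mem_univ, true_and] at hi ⊢
      rwa [addE_apply, if_neg (by tauto)] at hi
  have hS : S.Nonempty := ⟨j, hjS⟩
  have hS' : S'.Nonempty := ⟨j, hSS' hjS⟩
  rw [dif_pos hS', dif_pos hS]
  apply le_antisymm
  · apply Finset.sup'_le
    intro i hi
    rcases hS'sub i hi with rfl | hiS
    · exact le_trans (hmono hkj) (Finset.le_sup' pu hjS)
    · exact Finset.le_sup' pu hiS
  · exact Finset.sup'_le _ _ fun i hi => Finset.le_sup' pu (hSS' hi)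

lemma tristate_nextQ_addE (Q : QS M K N) (u : Fin M) (k : Fin K) (h : Q.1 u k < N u k)
    (v : Fin M) (hvu : v ≠ u) (a : Fin M → Fin K → ℕ)
    (j : Fin K) (hkj : k ≤ j) (hj : 0 < Q.1 u j) :
    TriState (nextQ (addE Q u k h) v a) (nextQ Q v a) := by
  intro m
  by_cases hm : m = u
  · subst hm
    intro k'
    by_cases hk : k' = k
    · subst hk
      constructor
      · intro _
        show min ((if m = v then 0 else Q.1 m k') + a m k') (N m k') ≤
          min ((if m = v then 0 else (addE Q m k' h).1 m k') + a m k') (N m k')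
        rw [if_neg (Ne.symm hvu), if_neg (Ne.symm hvu), addE_apply, if_pos ⟨rfl, rfl⟩]
        exact min_le_min (by omega) le_rfl
      · intro hne
        exfalso
        refine hne ⟨j, hkj, ?_⟩
        show 0 < min ((if m = v then 0 else Q.1 m j) + a m j) (N m j)
        rw [if_neg (Ne.symm hvu)]
        have := Q.2 m j
        omega
    · have heq : (nextQ (addE Q m k h) v a).1 m k' = (nextQ Q v a).1 m k' := by
        show min ((if m = v then 0 else (addE Q m k h).1 m k') + a m k') (N m k') =
          min ((if m = v then 0 else Q.1 m k') + a m k') (N m k')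
        rw [addE_apply, if_neg (show ¬(m = m ∧ k' = k) from fun hc => hk hc.2)]
      exact ⟨fun _ => heq.ge, fun _ => heq⟩
  · have heq : ∀ i, (nextQ (addE Q u k h) v a).1 m i = (nextQ Q v a).1 m i := by
      intro i
      show min ((if m = v then 0 else (addE Q u k h).1 m i) + a m i) (N m i) =
        min ((if m = v then 0 else Q.1 m i) + a m i) (N m i)
      rw [addE_apply, if_neg (show ¬(m = u ∧ i = k) from fun hc => hm hc.1)]
    exact fun k' => ⟨fun _ => (heq k').ge, fun _ => heq k'⟩

end Aux

/-- Partial switch structure of the low-complexity suboptimal policy in the nonuniform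
case (Theorem 4, part 2): for a separable value function `V(Q) = Σ_m V_m(Q_m)` with
`⊵`-monotone components `V_m`, if content `u` minimizes the state-action cost at `Q` and
`Q u k < N u k` with `Q + E_{u,k} ⊵ Q`, then `u` still minimizes the state-action cost at
`Q + E_{u,k}`. -/
theorem suboptimal_policy_partial_switch_structure
    {M K : ℕ} (hM : 1 ≤ M) (hK : 1 ≤ K) (N : Fin M → Fin K → ℕ)
    (𝒜 : Finset (Fin M → Fin K → ℕ)) (ρ : (Fin M → Fin K → ℕ) → ℝ)
    (hρ0 : ∀ a ∈ 𝒜, 0 ≤ ρ a) (hρ1 : ∑ a ∈ 𝒜, ρ a = 1)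
    (wp wf : ℝ) (p : Fin M → Fin K → ℝ) (f : Fin M → ℝ)
    (hp0 : ∀ m k, 0 ≤ p m k) (hpmono : ∀ m, Monotone (p m))
    (Vm : Fin M → (Fin K → ℕ) → ℝ)
    (hVm : ∀ m (q₁ q₂ : Fin K → ℕ), TriVec q₂ q₁ → Vm m q₁ ≤ Vm m q₂) :
    ∀ (Q : QS M K N) (u : Fin M) (k : Fin K) (h : Q.1 u k < N u k),
      TriState (addE Q u k h) Q →
      (∀ v : Fin M,
        JCost 𝒜 ρ wp wf p f (fun Q' => ∑ m, Vm m (Q'.1 m)) Q u ≤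
          JCost 𝒜 ρ wp wf p f (fun Q' => ∑ m, Vm m (Q'.1 m)) Q v) →
      ∀ v : Fin M,
        JCost 𝒜 ρ wp wf p f (fun Q' => ∑ m, Vm m (Q'.1 m)) (addE Q u k h) u ≤
          JCost 𝒜 ρ wp wf p f (fun Q' => ∑ m, Vm m (Q'.1 m)) (addE Q u k h) v := by
  intro Q u k h hT hmin v
  set V : QS M K N → ℝ := fun Q' => ∑ m, Vm m (Q'.1 m) with hVdef
  -- witness j ≥ k with Q u j > 0
  obtain ⟨j, hkj, hj⟩ : ∃ j, k ≤ j ∧ 0 < Q.1 u j := by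
    by_contra hne
    have h2 := (hT u k).2 hne
    rw [addE_apply] at h2
    simp at h2
  rcases eq_or_ne v u with rfl | hvu
  · exact le_rfl
  -- value sums
  have hsum : (∑ m, ∑ k', ((addE Q u k h).1 m k' : ℝ))
      = (∑ m, ∑ k', (Q.1 m k' : ℝ)) + 1 := by
    exact_mod_cast sum_addE Q u k h
  -- g for action u
  have hgu : gCost wp wf p f (addE Q u k h) u = gCost wp wf p f Q u + 1 := by
    unfold gCost
    rw [hsum, PCost_addE Q u k h (p u) (hpmono u) j hkj hj]
    ring
  -- g for action v ≠ u
  have hgv : gCost wp wf p f (addE Q u k h) v = gCost wp wf p f Q v + 1 := by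
    unfold gCost
    rw [hsum, addE_ne Q u k h v hvu]
    ring
  -- future term for action u is unchanged
  have hfu : ∀ a, V (nextQ (addE Q u k h) u a) = V (nextQ Q u a) := by
    intro a; rw [nextQ_addE_self]
  -- future term for action v only increases
  have hfv : ∀ a ∈ 𝒜, ρ a * V (nextQ Q v a) ≤ ρ a * V (nextQ (addE Q u k h) v a) := by
    intro a ha
    refine mul_le_mul_of_nonneg_left ?_ (hρ0 a ha)
    apply Finset.sum_le_sum
    intro m _
    exact hVm m _ _ (tristate_nextQ_addE Q u k h v hvu a j hkj hj m)
  calc JCost 𝒜 ρ wp wf p f V (addE Q u k h) u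
      = JCost 𝒜 ρ wp wf p f V Q u + 1 := by
        unfold JCost
        rw [hgu, Finset.sum_congr rfl fun a _ => by rw [hfu a]]
        ring
    _ ≤ JCost 𝒜 ρ wp wf p f V Q v + 1 := by linarith [hmin v]
    _ ≤ JCost 𝒜 ρ wp wf p f V (addE Q u k h) v := by
        unfold JCost
        rw [hgv]
        have := Finset.sum_le_sum hfv
        linarith
end
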